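/- arXiv:1703.07964 — 3 statements merged into one kernel-verified Lean document; each statement's English description precedes it below -/
import Mathlib

section
/- Let G be a simple directed graph with nonnegative edge weights. For every non-degenerate cycle W of G there is a simple non-degenerate cycle of G, each of whose edges is traversed by W, whose weight is at most w(W). Consequently, if G has a non-degenerate cycle, then the minimum weight over all non-degenerate cycles of G equals the minimum weight over all simple non-degenerate cycles of G. -/
open scoped ENNReal

/-- A simple directed graph on node type `V`, with nonnegative (extended-real)
edge weights: there are no self-loops, and between any ordered pair of nodes
there is at most one edge (so no parallel edges). -/
structure WDigraph (V : Type) where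
  Edge : V → V → Prop
  w : V → V → ℝ≥0∞
  irrefl : ∀ v, ¬ Edge v v

namespace WDigraph

variable {V : Type}

/-- The consecutive steps (directed edges) of a walk given as its list of nodes. -/
def steps (l : List V) : List (V × V) := l.zip l.tail

/-- `l` is a walk of `G` (nodes may repeat). -/
def IsWalk (G : WDigraph V) (l : List V) : Prop := l ≠ [] ∧ l.Chain' G.Edge

/-- `l` is an `s`-`t`-path of `G` (nodes may repeat). -/
def IsPath (G : WDigraph V) (s t : V) (l : List V) : Prop :=
  G.IsWalk l ∧ l.head? = some s ∧ l.getLast? = some t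

/-- The weight of a walk: the sum of the weights of its edges. -/
noncomputable def wWalk (G : WDigraph V) (l : List V) : ℝ≥0∞ :=
  ((steps l).map fun e => G.w e.1 e.2).sum

/-- A cycle of `G` is an `s`-`s`-path for some node `s`. -/
def IsCycle (G : WDigraph V) (l : List V) : Prop := ∃ s, G.IsPath s s l

/-- The walk `l` traverses the directed edge `(s,t)`. -/
def Traverses (l : List V) (s t : V) : Prop := (s, t) ∈ steps l

/-- A cycle is degenerate if it is a single node or traverses both `st` and `ts`. -/
def Degenerate (l : List V) : Prop :=
  l.length = 1 ∨ ∃ s t, Traverses l s t ∧ Traverses l t s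

/-- A simple cycle passes each node at most once. -/
def IsSimpleCycle (G : WDigraph V) (l : List V) : Prop :=
  G.IsCycle l ∧ l.dropLast.Nodup

/-- `G` is bidirected: `st` is an edge iff `ts` is an edge. -/
def Bidirected (G : WDigraph V) : Prop := ∀ u v, G.Edge u v → G.Edge v u

/-- `d_G(u,v)`: the minimum weight of a `u`-`v`-path, `∞` if there is none. -/
noncomputable def dist (G : WDigraph V) (s t : V) : ℝ≥0∞ :=
  sInf {x | ∃ l, G.IsPath s t l ∧ G.wWalk l = x}

end WDigraph



namespace WDigraph

variable {V : Type}

lemma steps_cons_cons (x y : V) (l : List V) :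
    steps (x :: y :: l) = (x, y) :: steps (y :: l) := rfl

lemma steps_sublist_append_left (a l : List V) : (steps l).Sublist (steps (a ++ l)) := by
  induction a with
  | nil => simp
  | cons x a ih =>
    show (steps l).Sublist (steps (x :: (a ++ l)))
    cases h : a ++ l with
    | nil =>
      have hl : l = [] := (List.append_eq_nil_iff.mp h).2
      simp [hl, steps]
    | cons y r =>
      rw [h] at ih
      rw [steps_cons_cons]
      exact ih.trans (List.sublist_cons_self _ _)

lemma steps_sublist_append_right (l c : List V) : (steps l).Sublist (steps (l ++ c)) := by
  induction l with
  | nil => simp [steps]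
  | cons x l ih =>
    cases l with
    | nil => simp [steps]
    | cons y l' =>
      show (steps (x :: y :: l')).Sublist (steps (x :: y :: (l' ++ c)))
      rw [steps_cons_cons, steps_cons_cons]
      exact List.Sublist.cons₂ _ ih

lemma steps_sublist_of_infix {l m : List V} (h : l <:+: m) :
    (steps l).Sublist (steps m) := by
  obtain ⟨a, c, rfl⟩ := h
  have h2 := (steps_sublist_append_right l c).trans
    (steps_sublist_append_left a (l ++ c))
  rwa [← List.append_assoc] at h2

lemma sum_le_sum_sublist {l m : List ℝ≥0∞} (h : l.Sublist m) : l.sum ≤ m.sum := by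
  induction h with
  | slnil => exact le_rfl
  | cons a h ih => simp only [List.sum_cons]; exact ih.trans le_add_self
  | cons_cons a h ih => simp only [List.sum_cons]; exact add_le_add le_rfl ih

lemma wWalk_mono (G : WDigraph V) {l m : List V} (h : (steps l).Sublist (steps m)) :
    G.wWalk l ≤ G.wWalk m :=
  sum_le_sum_sublist (h.map _)

lemma exists_dup {l : List V} (h : ¬ l.Nodup) :
    ∃ (a : List V) (v : V) (b c : List V), l = a ++ v :: (b ++ v :: c) := by
  induction l with
  | nil => exact absurd List.nodup_nil h
  | cons x xs ih =>
    by_cases hx : x ∈ xs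
    · obtain ⟨b, c, rfl⟩ := List.append_of_mem hx
      exact ⟨[], x, b, c, rfl⟩
    · have hxs : ¬ xs.Nodup := fun hn => h (List.nodup_cons.mpr ⟨hx, hn⟩)
      obtain ⟨a, v, b, c, rfl⟩ := ih hxs
      exact ⟨x :: a, v, b, c, rfl⟩

lemma key (G : WDigraph V) : ∀ n (W : List V), W.length ≤ n → G.IsCycle W →
    ¬ Degenerate W →
    ∃ l, G.IsSimpleCycle l ∧ ¬ Degenerate l ∧
      (∀ s t, Traverses l s t → Traverses W s t) ∧ G.wWalk l ≤ G.wWalk W := by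
  intro n
  induction n with
  | zero =>
    intro W hlen hcyc _
    obtain ⟨s, ⟨hne, _⟩, _⟩ := hcyc
    exact absurd (List.length_eq_zero_iff.mp (Nat.le_zero.mp hlen)) hne
  | succ n ih =>
    intro W hlen hcyc hdeg
    by_cases hnd : W.dropLast.Nodup
    · exact ⟨W, ⟨hcyc, hnd⟩, hdeg, fun s t h => h, le_rfl⟩
    · obtain ⟨a, v, b, c, hd⟩ := exists_dup hnd
      obtain ⟨s, ⟨hne, hch⟩, hhead, hlast⟩ := hcyc
      have hW : W = a ++ (v :: (b ++ [v])) ++ (c ++ [W.getLast hne]) := by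
        conv_lhs => rw [← List.dropLast_append_getLast hne]
        rw [hd]; simp
      have hinf : (v :: (b ++ [v])) <:+: W := ⟨a, c ++ [W.getLast hne], hW.symm⟩
      have hsub : (steps (v :: (b ++ [v]))).Sublist (steps W) := steps_sublist_of_infix hinf
      have hPcyc : G.IsCycle (v :: (b ++ [v])) := by
        refine ⟨v, ⟨⟨List.cons_ne_nil _ _, hch.infix hinf⟩, rfl, ?_⟩⟩
        show (v :: (b ++ [v])).getLast? = some v
        rw [show v :: (b ++ [v]) = (v :: b) ++ [v] by simp]
        exact List.getLast?_concat
      have hPdeg : ¬ Degenerate (v :: (b ++ [v])) := by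
        rintro (h1 | ⟨s', t', h1, h2⟩)
        · simp at h1
        · exact hdeg (Or.inr ⟨s', t', hsub.subset h1, hsub.subset h2⟩)
      have hPlen : (v :: (b ++ [v])).length ≤ n := by
        have h1 := congrArg List.length hW
        simp only [List.length_append, List.length_cons, List.length_nil] at h1 ⊢
        omega
      obtain ⟨l, h1, h2, h3, h4⟩ := ih _ hPlen hPcyc hPdeg
      exact ⟨l, h1, h2, fun s t h => hsub.subset (h3 s t h),
        h4.trans (G.wWalk_mono hsub)⟩

end WDigraph

/-- A plane embedding of the (bidirected) graph with adjacency `A` on node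
type `V`: nodes are drawn as distinct points, each bundled pair of oppositely
directed edges is drawn as a single simple arc joining its endpoints, and two
arcs meet only at common endpoints and avoid all other nodes. -/
structure PlaneEmbedding {V : Type} (A : V → V → Prop) where
  pos : V → ℝ × ℝ
  arc : V → V → ℝ → ℝ × ℝ
  pos_inj : Function.Injective pos
  arc_cont : ∀ u v, A u v → ContinuousOn (arc u v) (Set.Icc 0 1)
  arc_start : ∀ u v, A u v → arc u v 0 = pos u
  arc_end : ∀ u v, A u v → arc u v 1 = pos v
  arc_inj : ∀ u v, A u v → Set.InjOn (arc u v) (Set.Icc 0 1)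
  arc_symm : ∀ u v, A u v → ∀ t, arc v u t = arc u v (1 - t)
  arc_avoid : ∀ u v, A u v → ∀ x : V, pos x ∈ arc u v '' Set.Icc 0 1 → x = u ∨ x = v
  arc_meet : ∀ u v x y, A u v → A x y → ({u, v} : Set V) ≠ {x, y} →
    arc u v '' Set.Icc 0 1 ∩ arc x y '' Set.Icc 0 1 ⊆ ({pos u, pos v} : Set (ℝ × ℝ)) ∩ {pos x, pos y}

/-- The drawing (point set in the plane) of a set of directed edges. -/
def PlaneEmbedding.drawing {V : Type} {A : V → V → Prop} (emb : PlaneEmbedding A)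
    (E : Set (V × V)) : Set (ℝ × ℝ) :=
  ⋃ e ∈ E, emb.arc e.1 e.2 '' Set.Icc 0 1

/-- The drawing of the whole graph. -/
def PlaneEmbedding.fullDrawing {V : Type} {A : V → V → Prop} (emb : PlaneEmbedding A) :
    Set (ℝ × ℝ) :=
  emb.drawing {e | A e.1 e.2}

/-- A face of the embedded graph: a connected component of the complement of
the drawing. -/
def PlaneEmbedding.IsFace {V : Type} {A : V → V → Prop} (emb : PlaneEmbedding A)
    (F : Set (ℝ × ℝ)) : Prop :=
  ∃ x, x ∉ emb.fullDrawing ∧ F = connectedComponentIn (emb.fullDrawing)ᶜ x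

/-- Let `G` be a simple directed graph with nonnegative edge
weights.  For every non-degenerate cycle `W` of `G` there is a simple
non-degenerate cycle of `G`, each of whose edges is traversed by `W`, whose
weight is at most `w(W)`.  Consequently, if `G` has a non-degenerate cycle,
then the minimum weight over all non-degenerate cycles of `G` equals the
minimum weight over all simple non-degenerate cycles of `G`. -/
theorem stmt3 {V : Type} (G : WDigraph V) :
    (∀ W, G.IsCycle W → ¬ WDigraph.Degenerate W →
      ∃ l, G.IsSimpleCycle l ∧ ¬ WDigraph.Degenerate l ∧
        (∀ s t, WDigraph.Traverses l s t → WDigraph.Traverses W s t) ∧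
        G.wWalk l ≤ G.wWalk W) ∧
    ((∃ W, G.IsCycle W ∧ ¬ WDigraph.Degenerate W) →
      sInf {x | ∃ l, G.IsCycle l ∧ ¬ WDigraph.Degenerate l ∧ G.wWalk l = x} =
        sInf {x | ∃ l, G.IsSimpleCycle l ∧ ¬ WDigraph.Degenerate l ∧ G.wWalk l = x}) := by

  have key : ∀ W, G.IsCycle W → ¬ WDigraph.Degenerate W →
      ∃ l, G.IsSimpleCycle l ∧ ¬ WDigraph.Degenerate l ∧
        (∀ s t, WDigraph.Traverses l s t → WDigraph.Traverses W s t) ∧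
        G.wWalk l ≤ G.wWalk W :=
    fun W hc hd => G.key W.length W le_rfl hc hd
  refine ⟨key, fun _ => ?_⟩
  apply le_antisymm
  · apply sInf_le_sInf
    rintro x ⟨l, h1, h2, h3⟩
    exact ⟨l, h1.1, h2, h3⟩
  · refine le_sInf ?_
    rintro x ⟨l, hc, hd, rfl⟩
    obtain ⟨m, h1, h2, _, h4⟩ := key l hc hd
    have hm : G.wWalk m ∈ {x | ∃ l, G.IsSimpleCycle l ∧ ¬ WDigraph.Degenerate l ∧
        G.wWalk l = x} := ⟨m, h1, h2, rfl⟩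
    exact (sInf_le hm).trans h4
end

section
/- Let G be a simple directed graph with nonnegative edge weights and let W be a cycle of G that traverses an edge st but does not traverse the edge ts. Then G has a simple non-degenerate cycle containing the edge st, each of whose edges is traversed by W, and whose weight is at most w(W). -/
open scoped ENNReal

namespace WDigraph

variable {V : Type}

@[simp] lemma steps_nil' : steps ([] : List V) = [] := rfl
@[simp] lemma steps_single' (a : V) : steps [a] = [] := rfl
@[simp] lemma steps_cons₂ (a b : V) (l : List V) :
    steps (a :: b :: l) = (a, b) :: steps (b :: l) := rfl

lemma mem_steps_iff {l : List V} {x y : V} :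
    (x, y) ∈ steps l ↔ ∃ i, l[i]? = some x ∧ l[i + 1]? = some y := by
  induction l with
  | nil => simp
  | cons a l ih =>
    cases l with
    | nil => simp
    | cons b l =>
      rw [steps_cons₂, List.mem_cons, ih]
      constructor
      · rintro (h | ⟨i, h1, h2⟩)
        · obtain ⟨rfl, rfl⟩ := Prod.mk.injEq .. ▸ h
          exact ⟨0, by simp, by simp⟩
        · exact ⟨i + 1, by simpa using h1, by simpa using h2⟩
      · rintro ⟨i, h1, h2⟩
        cases i with
        | zero =>
          simp only [List.getElem?_cons_zero, List.getElem?_cons_succ,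
            Option.some.injEq] at h1 h2
          left; simp [← h1, ← h2]
        | succ i =>
          right; exact ⟨i, by simpa using h1, by simpa using h2⟩

lemma steps_append (xs : List V) (v : V) (ys : List V) :
    steps (xs ++ v :: ys) = steps (xs ++ [v]) ++ steps (v :: ys) := by
  induction xs with
  | nil => simp
  | cons a xs ih =>
    cases xs with
    | nil => simp
    | cons b xs =>
      simp only [List.cons_append, steps_cons₂] at ih ⊢
      rw [ih]

lemma edge_of_mem_steps {E : V → V → Prop} {l : List V} (h : l.Chain' E) {x y : V}
    (hxy : (x, y) ∈ steps l) : E x y := by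
  obtain ⟨i, h1, h2⟩ := mem_steps_iff.mp hxy
  rw [List.getElem?_eq_some_iff] at h1 h2
  obtain ⟨hb1, e1⟩ := h1
  obtain ⟨hb2, e2⟩ := h2
  have := List.isChain_iff_getElem.mp h i (by omega)
  simpa [List.get_eq_getElem, e1, e2] using this

lemma exists_dup_decomp {l : List V} (h : ¬ l.Nodup) :
    ∃ (v : V) (P Q R : List V), l = P ++ v :: Q ++ v :: R := by
  induction l with
  | nil => simp at h
  | cons a l ih =>
    rw [List.nodup_cons] at h
    by_cases ha : a ∈ l
    · obtain ⟨Q, R, rfl⟩ := List.append_of_mem ha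
      exact ⟨a, [], Q, R, rfl⟩
    · obtain ⟨v, P, Q, R, rfl⟩ := ih (fun hn => h ⟨ha, hn⟩)
      exact ⟨v, a :: P, Q, R, rfl⟩

lemma simple_cycle_two_steps {l : List V} (hne : l ≠ [])
    (hcyc : l.head? = l.getLast?) (hnd : l.dropLast.Nodup)
    {a b : V} (hab : (a, b) ∈ steps l) (hba : (b, a) ∈ steps l) (hne' : a ≠ b) :
    ∀ p ∈ steps l, p = (a, b) ∨ p = (b, a) := by
  set n := l.length with hn
  have hn1 : 0 < n := List.length_pos_iff.mpr hne
  have hdl : l.dropLast.length = n - 1 := by simp [hn]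
  have inj : ∀ i j x, i < n - 1 → j < n - 1 → l[i]? = some x → l[j]? = some x → i = j := by
    intro i j x hi hj h1 h2
    rw [List.getElem?_eq_some_iff] at h1 h2
    obtain ⟨b1, e1⟩ := h1
    obtain ⟨b2, e2⟩ := h2
    have hi' : i < l.dropLast.length := by rw [hdl]; exact hi
    have hj' : j < l.dropLast.length := by rw [hdl]; exact hj
    refine (hnd.getElem_inj_iff (hi := hi') (hj := hj')).mp ?_
    rw [List.getElem_dropLast, List.getElem_dropLast]
    exact e1.trans e2.symm
  have hs0 : l[0]? = l[n - 1]? := by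
    rw [← List.head?_eq_getElem?, ← List.getLast?_eq_getElem?]; exact hcyc
  obtain ⟨i, ha1, ha2⟩ := mem_steps_iff.mp hab
  obtain ⟨j, hb1, hb2⟩ := mem_steps_iff.mp hba
  have hi : i + 1 < n := by
    have := ha2; rw [List.getElem?_eq_some_iff] at this; exact this.1
  have hj : j + 1 < n := by
    have := hb2; rw [List.getElem?_eq_some_iff] at this; exact this.1
  have key : n = 3 ∧ ((l[0]? = some a ∧ l[1]? = some b ∧ l[2]? = some a) ∨
      (l[0]? = some b ∧ l[1]? = some a ∧ l[2]? = some b)) := by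
    by_cases hc : i + 1 < n - 1
    · have hji : j = i + 1 := inj j (i + 1) b (by omega) hc hb1 ha2
      by_cases hc2 : j + 1 < n - 1
      · exfalso
        have : i = j + 1 := inj i (j + 1) a (by omega) hc2 ha1 hb2
        omega
      · have hj1 : j + 1 = n - 1 := by omega
        have h0a : l[0]? = some a := by rw [hs0, ← hj1]; exact hb2
        have hi0 : i = 0 := inj i 0 a (by omega) (by omega) ha1 h0a
        have hn3 : n = 3 := by omega
        refine ⟨hn3, Or.inl ⟨h0a, ?_, ?_⟩⟩
        · have h1e : (1 : ℕ) = i + 1 := by omega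
          rw [h1e]; exact ha2
        · have h2e : (2 : ℕ) = j + 1 := by omega
          rw [h2e]; exact hb2
    · have hi1 : i + 1 = n - 1 := by omega
      have h0b : l[0]? = some b := by rw [hs0, ← hi1]; exact ha2
      have hj0 : j = 0 := inj j 0 b (by omega) (by omega) hb1 h0b
      by_cases hc2 : 1 < n - 1
      · have h1a : l[1]? = some a := by
          have h1e : (1 : ℕ) = j + 1 := by omega
          rw [h1e]; exact hb2
        have hi1' : i = 1 := inj i 1 a (by omega) hc2 ha1 h1a
        have hn3 : n = 3 := by omega
        refine ⟨hn3, Or.inr ⟨h0b, h1a, ?_⟩⟩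
        have h2e : (2 : ℕ) = i + 1 := by omega
        rw [h2e]; exact ha2
      · exfalso
        have hi0 : i = 0 := by omega
        subst hi0
        rw [ha1] at h0b
        exact hne' (by injection h0b)
  obtain ⟨hn3, hvals⟩ := key
  rintro ⟨x, y⟩ hp
  obtain ⟨k, hk1, hk2⟩ := mem_steps_iff.mp hp
  have hk : k + 1 < n := by
    have := hk2; rw [List.getElem?_eq_some_iff] at this; exact this.1
  have hk01 : k = 0 ∨ k = 1 := by omega
  rcases hvals with ⟨h0, h1, h2⟩ | ⟨h0, h1, h2⟩ <;> rcases hk01 with rfl | rfl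
  · obtain rfl : x = a := Option.some_injective _ (hk1.symm.trans h0)
    obtain rfl : y = b := Option.some_injective _ (hk2.symm.trans h1)
    exact Or.inl rfl
  · obtain rfl : x = b := Option.some_injective _ (hk1.symm.trans h1)
    obtain rfl : y = a := Option.some_injective _ (hk2.symm.trans h2)
    exact Or.inr rfl
  · obtain rfl : x = b := Option.some_injective _ (hk1.symm.trans h0)
    obtain rfl : y = a := Option.some_injective _ (hk2.symm.trans h1)
    exact Or.inr rfl
  · obtain rfl : x = a := Option.some_injective _ (hk1.symm.trans h1)
    obtain rfl : y = b := Option.some_injective _ (hk2.symm.trans h2)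
    exact Or.inl rfl


lemma stmt4_aux (G : WDigraph V) (s t : V) :
    ∀ n (W : List V), W.length ≤ n → G.IsCycle W → (s, t) ∈ steps W →
      (t, s) ∉ steps W →
      ∃ l, G.IsSimpleCycle l ∧ ¬ Degenerate l ∧ (s, t) ∈ steps l ∧
        (∀ p ∈ steps l, p ∈ steps W) ∧ G.wWalk l ≤ G.wWalk W := by
  intro n
  induction n with
  | zero =>
    intro W hlen hW _ _
    obtain ⟨s0, ⟨hne, _⟩, _, _⟩ := hW
    cases W with
    | nil => exact absurd rfl hne
    | cons a l => simp at hlen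
  | succ n ih =>
    intro W hlen hW hst hts
    by_cases hnd : W.dropLast.Nodup
    · have hWc := hW
      obtain ⟨s0, ⟨hne, hch⟩, hhd, hlt⟩ := hW
      refine ⟨W, ⟨hWc, hnd⟩, ?_, hst, fun p hp => hp, le_rfl⟩
      rintro (h1 | ⟨a, b, hab, hba⟩)
      · obtain ⟨x, rfl⟩ := List.length_eq_one_iff.mp h1
        simp [Traverses] at hst
      · by_cases hab' : a = b
        · subst hab'
          exact G.irrefl a (edge_of_mem_steps hch hab)
        · have h2 := simple_cycle_two_steps hne (hhd.trans hlt.symm) hnd hab hba hab' (s, t) hst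
          rcases h2 with h | h
          · obtain ⟨rfl, rfl⟩ := Prod.mk.injEq .. ▸ h
            exact hts hba
          · obtain ⟨rfl, rfl⟩ := Prod.mk.injEq .. ▸ h
            exact hts hab
    · obtain ⟨s0, ⟨hne, hch⟩, hhd, hlt⟩ := hW
      obtain ⟨v, P, Q, R', hdec⟩ := exists_dup_decomp hnd
      set z := W.getLast hne with hz
      set R : List V := R' ++ [z] with hR
      have hWeq : W = P ++ v :: (Q ++ v :: R) := by
        conv_lhs => rw [← List.dropLast_append_getLast hne, hdec]
        simp [hR, hz]
      have hzs0 : z = s0 := by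
        have h := List.getLast?_eq_getLast hne
        rw [hlt] at h
        exact (Option.some.inj h).symm
      set C1 : List V := (v :: Q) ++ [v] with hC1
      set C2 : List V := P ++ v :: R with hC2
      have hsplit1 : steps W = steps (P ++ [v]) ++ (steps C1 ++ steps (v :: R)) := by
        rw [hWeq, steps_append P v (Q ++ v :: R)]
        congr 1
        exact steps_append (v :: Q) v R
      have hsplit2 : steps C2 = steps (P ++ [v]) ++ steps (v :: R) := steps_append P v R
      have hmem : ∀ p : V × V, p ∈ steps W ↔ p ∈ steps C1 ∨ p ∈ steps C2 := by
        intro p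
        rw [hsplit1, hsplit2]
        simp only [List.mem_append]
        tauto
      have wW : G.wWalk W =
          G.wWalk (P ++ [v]) + (G.wWalk C1 + G.wWalk (v :: R)) := by
        simp only [wWalk, hsplit1, List.map_append, List.sum_append]
      have wC2 : G.wWalk C2 = G.wWalk (P ++ [v]) + G.wWalk (v :: R) := by
        simp only [wWalk, hsplit2, List.map_append, List.sum_append]
      have hw1 : G.wWalk C1 ≤ G.wWalk W := by
        rw [wW]
        exact le_self_add.trans le_add_self
      have hw2 : G.wWalk C2 ≤ G.wWalk W := by
        rw [wW, wC2]
        exact add_le_add_right le_add_self _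
      have hC1cyc : G.IsCycle C1 := by
        refine ⟨v, ⟨by simp [hC1], ?_⟩, by simp [hC1], by rw [hC1]; exact List.getLast?_concat⟩
        refine hch.infix ⟨P, R, ?_⟩
        rw [hWeq]
        simp [hC1]
      have hC2cyc : G.IsCycle C2 := by
        have hch' := hch
        rw [hWeq] at hch'
        obtain ⟨cP, cRest, link⟩ := List.isChain_append.mp hch'
        refine ⟨s0, ⟨by simp [hC2], ?_⟩, ?_, ?_⟩
        · refine List.isChain_append.mpr ⟨cP, cRest.infix ⟨v :: Q, [], by simp⟩, ?_⟩
          intro x hx y hy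
          obtain rfl : v = y := by simpa using hy
          exact link x hx v (by simp)
        · rw [hC2, List.head?_append]
          rw [hWeq, List.head?_append] at hhd
          simpa using hhd
        · have hc2 : C2 = (P ++ v :: R') ++ [z] := by simp [hC2, hR]
          rw [hc2, List.getLast?_concat, hzs0]
      have hLW : W.length = P.length + Q.length + R'.length + 3 := by
        rw [hWeq, hR]
        simp
        omega
      have hl1 : C1.length ≤ n := by
        have : C1.length = Q.length + 2 := by simp [hC1]
        omega
      have hl2 : C2.length ≤ n := by
        have : C2.length = P.length + R'.length + 2 := by simp [hC2, hR]; omega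
        omega
      rcases (hmem (s, t)).mp hst with h1 | h2
      · obtain ⟨l, a1, a2, a3, a4, a5⟩ :=
          ih C1 hl1 hC1cyc h1 (fun hc => hts ((hmem (t, s)).mpr (Or.inl hc)))
        exact ⟨l, a1, a2, a3, fun p hp => (hmem p).mpr (Or.inl (a4 p hp)), a5.trans hw1⟩
      · obtain ⟨l, a1, a2, a3, a4, a5⟩ :=
          ih C2 hl2 hC2cyc h2 (fun hc => hts ((hmem (t, s)).mpr (Or.inr hc)))
        exact ⟨l, a1, a2, a3, fun p hp => (hmem p).mpr (Or.inr (a4 p hp)), a5.trans hw2⟩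

end WDigraph

/-- Let `G` be a simple directed graph with nonnegative edge
weights and let `W` be a cycle of `G` that traverses an edge `st` but does not
traverse the edge `ts`.  Then `G` has a simple non-degenerate cycle containing
the edge `st`, each of whose edges is traversed by `W`, and whose weight is at
most `w(W)`. -/
theorem stmt4 {V : Type} (G : WDigraph V) (W : List V) (s t : V)
    (hW : G.IsCycle W) (hst : WDigraph.Traverses W s t)
    (hts : ¬ WDigraph.Traverses W t s) :
    ∃ l, G.IsSimpleCycle l ∧ ¬ WDigraph.Degenerate l ∧ WDigraph.Traverses l s t ∧
      (∀ a b, WDigraph.Traverses l a b → WDigraph.Traverses W a b) ∧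
      G.wWalk l ≤ G.wWalk W := by
  obtain ⟨l, h1, h2, h3, h4, h5⟩ := WDigraph.stmt4_aux G s t W.length W le_rfl hW hst hts
  exact ⟨l, h1, h2, h3, fun a b h => h4 (a, b) h, h5⟩
end

section
/- Let G be a simple bidirected graph with nonnegative edge weights and let y be a node of G with exactly two neighbors x and z, where x and z are not adjacent in G. Let G' be obtained from G by deleting y and its four incident edges and adding edges xz with weight w(xy)+w(yz) and zx with weight w(zy)+w(yx). Then G has a non-degenerate cycle if and only if G' does, and in that case the minimum weight of a non-degenerate cycle of G equals the minimum weight of a non-degenerate cycle of G'. -/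
open scoped ENNReal

namespace Stmt7Aux
open WDigraph

variable {V : Type} {α : Type}

lemma steps_cons₂ (a b : α) (l : List α) : steps (a :: b :: l) = (a, b) :: steps (b :: l) := rfl

lemma steps_map (f : α → V) : ∀ (l : List α), steps (l.map f) = (steps l).map (Prod.map f f) := by
  intro l
  induction l with
  | nil => rfl
  | cons a t ih => cases t with
    | nil => rfl
    | cons b t' => simp_all [steps]

lemma mem_of_mem_steps {p : α × α} : ∀ {l : List α}, p ∈ steps l → p.1 ∈ l ∧ p.2 ∈ l := by
  intro l
  induction l with
  | nil => simp [steps]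
  | cons a t ih => cases t with
    | nil => simp [steps]
    | cons b t' =>
      intro hp
      rw [steps_cons₂] at hp
      rcases List.mem_cons.1 hp with h | h
      · subst h; simp
      · rcases ih h with ⟨h1, h2⟩
        exact ⟨List.mem_cons_of_mem _ h1, List.mem_cons_of_mem _ h2⟩

lemma steps_subset_cons (a : α) (t : List α) : steps t ⊆ steps (a :: t) := by
  cases t with
  | nil => simp [steps]
  | cons b t' => rw [steps_cons₂]; exact List.subset_cons_self _ _

lemma mem_steps_chain' {E : α → α → Prop} : ∀ {l : List α}, l.Chain' E → ∀ {u v : α}, (u, v) ∈ steps l → E u v := by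
  intro l
  induction l with
  | nil => simp [steps]
  | cons a t ih => cases t with
    | nil => simp [steps]
    | cons b t' =>
      intro hch u v hm
      rw [steps_cons₂] at hm
      rcases List.mem_cons.1 hm with h | h
      · injection h with h1 h2
        subst h1; subst h2
        exact (List.isChain_cons_cons.1 hch).1
      · exact ih (List.isChain_cons_cons.1 hch).2 h

noncomputable def wsum (w : α → α → ℝ≥0∞) : List α → ℝ≥0∞
  | [] => 0
  | [_] => 0
  | a :: b :: t => w a b + wsum w (b :: t)

lemma wsum_eq (w : α → α → ℝ≥0∞) : ∀ l : List α, ((steps l).map fun e => w e.1 e.2).sum = wsum w l := by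
  intro l
  induction l with
  | nil => rfl
  | cons a t ih => cases t with
    | nil => rfl
    | cons b t' => rw [steps_cons₂]; simp only [List.map_cons, List.sum_cons, ih, wsum]

lemma wWalk_eq_wsum (G : WDigraph V) (l : List V) : G.wWalk l = wsum G.w l := wsum_eq G.w l

lemma steps_append_last : ∀ (l : List α) (hl : l ≠ []) (c : α),
    steps (l ++ [c]) = steps l ++ [(l.getLast hl, c)] := by
  intro l
  induction l with
  | nil => simp
  | cons a t ih =>
    intro _ c
    cases t with
    | nil => rfl
    | cons b t' =>
      have h1 : steps ((a :: b :: t') ++ [c]) = (a, b) :: steps ((b :: t') ++ [c]) := rfl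
      rw [h1, ih (List.cons_ne_nil _ _) c, List.getLast_cons (List.cons_ne_nil _ _), steps_cons₂]
      rfl

lemma map_val_pmap {p : α → Prop} : ∀ (l : List α) (h : ∀ a ∈ l, p a),
    (l.pmap (fun a ha => (⟨a, ha⟩ : {a // p a})) h).map Subtype.val = l := by
  intro l
  induction l with
  | nil => simp
  | cons a t ih => intro h; simp [ih]

namespace D
variable {V : Type}

def Rel (G : WDigraph V) (x z : V) (u v : V) : Prop :=
  G.Edge u v ∨ (u = x ∧ v = z) ∨ (u = z ∧ v = x)

open scoped Classical in
noncomputable def Wt (G : WDigraph V) (x y z : V) (u v : V) : ℝ≥0∞ :=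
  if u = x ∧ v = z then G.w x y + G.w y z
  else if u = z ∧ v = x then G.w z y + G.w y x
  else G.w u v

lemma Wt_xz (G : WDigraph V) (x y z : V) : Wt G x y z x z = G.w x y + G.w y z := by
  rw [Wt, if_pos ⟨rfl, rfl⟩]

lemma Wt_zx (G : WDigraph V) (x y z : V) (hxz : x ≠ z) :
    Wt G x y z z x = G.w z y + G.w y x := by
  have h : ¬(z = x ∧ x = z) := fun h => hxz h.2
  rw [Wt, if_neg h, if_pos ⟨rfl, rfl⟩]

lemma Wt_other (G : WDigraph V) (x y z u v : V) (h1 : ¬(u = x ∧ v = z)) (h2 : ¬(u = z ∧ v = x)) :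
    Wt G x y z u v = G.w u v := by
  rw [Wt, if_neg h1, if_neg h2]

open scoped Classical in
noncomputable def delY (y : V) : List V → List V
  | [] => []
  | a :: t => if a = y then delY y t else a :: delY y t

lemma delY_nil (y : V) : delY y ([] : List V) = [] := rfl

lemma delY_cons_eq (y : V) (t : List V) : delY y (y :: t) = delY y t := by
  simp [delY]

lemma delY_cons_ne {y a : V} (h : a ≠ y) (t : List V) : delY y (a :: t) = a :: delY y t := by
  simp [delY, h]


lemma delY_main (G : WDigraph V) (y x z : V)
    (hbi : G.Bidirected) (hxz : x ≠ z)
    (hnb : ∀ a, G.Edge y a ↔ a = x ∨ a = z)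
    (hnadj : ¬ G.Edge x z) :
    ∀ (n : ℕ) (l : List V), l.length ≤ n → l.Chain' G.Edge →
    (∀ s t : V, (s, t) ∈ steps l → (t, s) ∈ steps l → False) →
    (∀ a ∈ l.head?, a ≠ y) → (∀ a ∈ l.getLast?, a ≠ y) →
    (delY y l).head? = l.head? ∧
    (delY y l).getLast? = l.getLast? ∧
    (delY y l).Chain' (Rel G x z) ∧
    (∀ v ∈ delY y l, v ≠ y) ∧
    wsum (Wt G x y z) (delY y l) = wsum G.w l ∧
    (∀ p ∈ steps (delY y l), p ∈ steps l ∨ ((p.1, y) ∈ steps l ∧ (y, p.2) ∈ steps l)) ∧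
    (2 ≤ l.length → 2 ≤ (delY y l).length) := by
  intro n
  induction n with
  | zero =>
    intro l hl _ _ _ _
    have : l = [] := List.length_eq_zero_iff.1 (Nat.le_zero.1 hl)
    subst this
    exact ⟨rfl, rfl, List.isChain_nil, by simp [delY_nil], rfl, by simp [delY_nil, steps], by simp⟩
  | succ n ih =>
    intro l hl hch H hhd hlast
    match l with
    | [] =>
      exact ⟨rfl, rfl, List.isChain_nil, by simp [delY_nil], rfl, by simp [delY_nil, steps], by simp⟩
    | [a] =>
      have ha : a ≠ y := hhd a rfl
      rw [delY_cons_ne ha, delY_nil]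
      refine ⟨rfl, rfl, ?_, ?_, rfl, ?_, ?_⟩
      · exact List.isChain_singleton a
      · intro v hv; rcases List.mem_singleton.1 hv with rfl; exact ha
      · intro p hp; simp [steps] at hp
      · simp
    | a :: b :: t =>
      have ha : a ≠ y := hhd a rfl
      have hstep1 : (a, b) ∈ steps (a :: b :: t) := by rw [steps_cons₂]; exact List.mem_cons_self
      by_cases hb : b = y
      · subst hb
        cases t with
        | nil =>
          exact absurd (hlast b (by simp)) (fun h => h rfl)
        | cons c t' =>
          have h1 : G.Edge a b := (List.isChain_cons_cons.1 hch).1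
          have hch2 := (List.isChain_cons_cons.1 hch).2
          have h2 : G.Edge b c := (List.isChain_cons_cons.1 hch2).1
          have hch3 := (List.isChain_cons_cons.1 hch2).2
          have hc : c ≠ b := fun h => G.irrefl b (h ▸ h2)
          have haxz : a = x ∨ a = z := (hnb a).1 (hbi a b h1)
          have hcxz : c = x ∨ c = z := (hnb c).1 h2
          have hsub : steps (c :: t') ⊆ steps (a :: b :: c :: t') := by
            intro p hp
            exact steps_subset_cons a _ (steps_subset_cons b _ hp)
          have hay : (a, b) ∈ steps (a :: b :: c :: t') := by
            rw [steps_cons₂]; exact List.mem_cons_self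
          have hyc : (b, c) ∈ steps (a :: b :: c :: t') := by
            rw [steps_cons₂, steps_cons₂]; exact List.mem_cons_of_mem _ (List.mem_cons_self)
          have hac : a ≠ c := by
            rintro rfl
            exact H a b hay hyc
          have hlast' : (a :: b :: c :: t').getLast? = (c :: t').getLast? := by
            rw [List.getLast?_cons_cons, List.getLast?_cons_cons]
          obtain ⟨ihh, ihl, ihch, ihm, ihw, ihs, ihlen⟩ :=
            ih (c :: t') (by simp at hl ⊢; omega) hch3
              (fun s t hs ht => H s t (hsub hs) (hsub ht))
              (fun v hv => by rw [List.head?_cons, Option.mem_some_iff] at hv; exact hv ▸ hc)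
              (fun v hv => hlast v (hlast' ▸ hv))
          obtain ⟨m', hm'⟩ : ∃ m', delY b (c :: t') = c :: m' := by
            cases hmm : delY b (c :: t') with
            | nil => rw [hmm] at ihh; simp at ihh
            | cons u m' =>
              rw [hmm] at ihh
              simp at ihh
              exact ⟨m', by rw [ihh]⟩
          have hdel : delY b (a :: b :: c :: t') = a :: c :: m' := by
            rw [delY_cons_ne ha, delY_cons_eq, hm']
          have hrel : Rel G x z a c := by
            rcases haxz with rfl | rfl
            · rcases hcxz with rfl | rfl
              · exact absurd rfl hac
              · exact Or.inr (Or.inl ⟨rfl, rfl⟩)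
            · rcases hcxz with rfl | rfl
              · exact Or.inr (Or.inr ⟨rfl, rfl⟩)
              · exact absurd rfl hac
          refine ⟨?_, ?_, ?_, ?_, ?_, ?_, ?_⟩
          · rw [hdel]; rfl
          · rw [hdel, List.getLast?_cons_cons, ← hm', ihl, hlast']
          · rw [hdel]
            exact List.isChain_cons_cons.2 ⟨hrel, hm' ▸ ihch⟩
          · rw [hdel]
            intro v hv
            rcases List.mem_cons.1 hv with rfl | hv
            · exact ha
            · exact ihm v (hm' ▸ hv)
          · rw [hdel]
            have hwac : Wt G x b z a c = G.w a b + G.w b c := by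
              rcases haxz with rfl | rfl
              · rcases hcxz with rfl | rfl
                · exact absurd rfl hac
                · exact Wt_xz G a b c
              · rcases hcxz with rfl | rfl
                · exact Wt_zx G c b a hxz
                · exact absurd rfl hac
            show Wt G x b z a c + wsum (Wt G x b z) (c :: m') = G.w a b + (G.w b c + wsum G.w (c :: t'))
            rw [hwac, ← hm', ihw, add_assoc]
          · rw [hdel]
            intro p hp
            rw [steps_cons₂] at hp
            rcases List.mem_cons.1 hp with rfl | hp
            · exact Or.inr ⟨hay, hyc⟩
            · rcases ihs p (hm' ▸ hp) with h | ⟨hp1, hp2⟩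
              · exact Or.inl (hsub h)
              · exact Or.inr ⟨hsub hp1, hsub hp2⟩
          · intro _; rw [hdel]; simp
      · have h1 : G.Edge a b := (List.isChain_cons_cons.1 hch).1
        have hlast' : (a :: b :: t).getLast? = (b :: t).getLast? := List.getLast?_cons_cons
        obtain ⟨ihh, ihl, ihch, ihm, ihw, ihs, ihlen⟩ :=
          ih (b :: t) (by simp at hl ⊢; omega) (List.isChain_cons_cons.1 hch).2
            (fun s t' hs ht => H s t' (steps_subset_cons a _ hs) (steps_subset_cons a _ ht))
            (fun v hv => by rw [List.head?_cons, Option.mem_some_iff] at hv; exact hv ▸ hb)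
            (fun v hv => hlast v (hlast' ▸ hv))
        obtain ⟨m', hm'⟩ : ∃ m', delY y (b :: t) = b :: m' := by
          cases hmm : delY y (b :: t) with
          | nil => rw [hmm] at ihh; simp at ihh
          | cons u m' =>
            rw [hmm] at ihh
            simp at ihh
            exact ⟨m', by rw [ihh]⟩
        have hdel : delY y (a :: b :: t) = a :: b :: m' := by
          rw [delY_cons_ne ha, hm']
        refine ⟨?_, ?_, ?_, ?_, ?_, ?_, ?_⟩
        · rw [hdel]; rfl
        · rw [hdel, List.getLast?_cons_cons, ← hm', ihl, hlast']
        · rw [hdel]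
          exact List.isChain_cons_cons.2 ⟨Or.inl h1, hm' ▸ ihch⟩
        · rw [hdel]
          intro v hv
          rcases List.mem_cons.1 hv with rfl | hv
          · exact ha
          · exact ihm v (hm' ▸ hv)
        · rw [hdel]
          have hwab : Wt G x y z a b = G.w a b := by
            refine Wt_other G x y z a b ?_ ?_
            · rintro ⟨rfl, rfl⟩; exact hnadj h1
            · rintro ⟨rfl, rfl⟩; exact hnadj (hbi _ _ h1)
          show Wt G x y z a b + wsum (Wt G x y z) (b :: m') = G.w a b + wsum G.w (b :: t)
          rw [hwab, ← hm', ihw]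
        · rw [hdel]
          intro p hp
          rw [steps_cons₂] at hp
          rcases List.mem_cons.1 hp with rfl | hp
          · exact Or.inl hstep1
          · rcases ihs p (hm' ▸ hp) with h | ⟨hp1, hp2⟩
            · exact Or.inl (steps_subset_cons a _ h)
            · exact Or.inr ⟨steps_subset_cons a _ hp1, steps_subset_cons a _ hp2⟩
        · intro _; rw [hdel]; simp


open scoped Classical in
noncomputable def expy (x y z : V) : List V → List V
  | [] => []
  | [a] => [a]
  | a :: b :: t =>
    if (a = x ∧ b = z) ∨ (a = z ∧ b = x) then a :: y :: expy x y z (b :: t)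
    else a :: expy x y z (b :: t)

lemma expy_cons₂_pos {x z a b : V} (y : V) (t : List V) (h : (a = x ∧ b = z) ∨ (a = z ∧ b = x)) :
    expy x y z (a :: b :: t) = a :: y :: expy x y z (b :: t) := by
  rw [expy, if_pos h]

lemma expy_cons₂_neg {x z a b : V} (y : V) (t : List V) (h : ¬((a = x ∧ b = z) ∨ (a = z ∧ b = x))) :
    expy x y z (a :: b :: t) = a :: expy x y z (b :: t) := by
  rw [expy, if_neg h]

lemma expy_main (G : WDigraph V) (y x z : V)
    (hbi : G.Bidirected) (hxz : x ≠ z)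
    (hnb : ∀ a, G.Edge y a ↔ a = x ∨ a = z) :
    ∀ l : List V, l.Chain' (Rel G x z) →
    (expy x y z l).head? = l.head? ∧
    (expy x y z l).getLast? = l.getLast? ∧
    (expy x y z l).Chain' G.Edge ∧
    wsum G.w (expy x y z l) = wsum (Wt G x y z) l ∧
    (∀ p ∈ steps (expy x y z l), p ∈ steps l ∨
      ((p = (x, y) ∨ p = (y, z)) ∧ (x, z) ∈ steps l) ∨
      ((p = (z, y) ∨ p = (y, x)) ∧ (z, x) ∈ steps l)) ∧
    l.length ≤ (expy x y z l).length := by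
  have hyx : G.Edge y x := (hnb x).2 (Or.inl rfl)
  have hyz : G.Edge y z := (hnb z).2 (Or.inr rfl)
  have hxy : G.Edge x y := hbi y x hyx
  have hzy : G.Edge z y := hbi y z hyz
  intro l
  induction l with
  | nil => exact fun _ => ⟨rfl, rfl, List.isChain_nil, rfl, by simp [expy, steps], by simp [expy]⟩
  | cons a t ih =>
    cases t with
    | nil =>
      exact fun _ => ⟨rfl, rfl, List.isChain_singleton a, rfl, by simp [expy, steps], by simp [expy]⟩
    | cons b t' =>
      intro hch
      have hRab : Rel G x z a b := (List.isChain_cons_cons.1 hch).1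
      have hstep1 : (a, b) ∈ steps (a :: b :: t') := by
        rw [steps_cons₂]; exact List.mem_cons_self
      obtain ⟨ihh, ihl, ihch, ihw, ihs, ihlen⟩ := ih (List.isChain_cons_cons.1 hch).2
      obtain ⟨m', hm'⟩ : ∃ m', expy x y z (b :: t') = b :: m' := by
        cases hmm : expy x y z (b :: t') with
        | nil => rw [hmm] at ihh; simp at ihh
        | cons u m' =>
          rw [hmm] at ihh
          simp at ihh
          exact ⟨m', by rw [ihh]⟩
      have hlast' : (a :: b :: t').getLast? = (b :: t').getLast? := List.getLast?_cons_cons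
      by_cases hc : (a = x ∧ b = z) ∨ (a = z ∧ b = x)
      · have hexp : expy x y z (a :: b :: t') = a :: y :: b :: m' := by
          rw [expy_cons₂_pos y t' hc, hm']
        have hEay : G.Edge a y := by rcases hc with ⟨rfl, rfl⟩ | ⟨rfl, rfl⟩ <;> assumption
        have hEyb : G.Edge y b := by rcases hc with ⟨rfl, rfl⟩ | ⟨rfl, rfl⟩ <;> assumption
        refine ⟨?_, ?_, ?_, ?_, ?_, ?_⟩
        · rw [hexp]; rfl
        · rw [hexp, List.getLast?_cons_cons, List.getLast?_cons_cons, ← hm', ihl, hlast']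
        · rw [hexp]
          exact List.isChain_cons_cons.2 ⟨hEay, List.isChain_cons_cons.2 ⟨hEyb, hm' ▸ ihch⟩⟩
        · rw [hexp]
          have hwab : Wt G x y z a b = G.w a y + G.w y b := by
            rcases hc with ⟨rfl, rfl⟩ | ⟨rfl, rfl⟩
            · exact Wt_xz G a y b
            · exact Wt_zx G b y a hxz
          show G.w a y + (G.w y b + wsum G.w (b :: m')) = Wt G x y z a b + wsum (Wt G x y z) (b :: t')
          rw [hwab, ← hm', ihw, add_assoc]
        · rw [hexp]
          intro p hp
          rw [steps_cons₂, steps_cons₂] at hp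
          rcases List.mem_cons.1 hp with rfl | hp
          · rcases hc with ⟨rfl, rfl⟩ | ⟨rfl, rfl⟩
            · exact Or.inr (Or.inl ⟨Or.inl rfl, hstep1⟩)
            · exact Or.inr (Or.inr ⟨Or.inl rfl, hstep1⟩)
          rcases List.mem_cons.1 hp with rfl | hp
          · rcases hc with ⟨rfl, rfl⟩ | ⟨rfl, rfl⟩
            · exact Or.inr (Or.inl ⟨Or.inr rfl, hstep1⟩)
            · exact Or.inr (Or.inr ⟨Or.inr rfl, hstep1⟩)
          · rcases ihs p (hm' ▸ hp) with h | ⟨h1, h2⟩ | ⟨h1, h2⟩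
            · exact Or.inl (steps_subset_cons a _ h)
            · exact Or.inr (Or.inl ⟨h1, steps_subset_cons a _ h2⟩)
            · exact Or.inr (Or.inr ⟨h1, steps_subset_cons a _ h2⟩)
        · rw [hexp]
          have := ihlen
          rw [hm'] at this
          simp only [List.length_cons] at this ⊢
          omega
      · have hexp : expy x y z (a :: b :: t') = a :: b :: m' := by
          rw [expy_cons₂_neg y t' hc, hm']
        have hEab : G.Edge a b := by
          rcases hRab with h | h | h
          · exact h
          · exact absurd (Or.inl h) hc
          · exact absurd (Or.inr h) hc
        refine ⟨?_, ?_, ?_, ?_, ?_, ?_⟩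
        · rw [hexp]; rfl
        · rw [hexp, List.getLast?_cons_cons, ← hm', ihl, hlast']
        · rw [hexp]
          exact List.isChain_cons_cons.2 ⟨hEab, hm' ▸ ihch⟩
        · rw [hexp]
          have hwab : Wt G x y z a b = G.w a b :=
            Wt_other G x y z a b (fun h => hc (Or.inl h)) (fun h => hc (Or.inr h))
          show G.w a b + wsum G.w (b :: m') = Wt G x y z a b + wsum (Wt G x y z) (b :: t')
          rw [hwab, ← hm', ihw]
        · rw [hexp]
          intro p hp
          rw [steps_cons₂] at hp
          rcases List.mem_cons.1 hp with rfl | hp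
          · exact Or.inl hstep1
          · rcases ihs p (hm' ▸ hp) with h | ⟨h1, h2⟩ | ⟨h1, h2⟩
            · exact Or.inl (steps_subset_cons a _ h)
            · exact Or.inr (Or.inl ⟨h1, steps_subset_cons a _ h2⟩)
            · exact Or.inr (Or.inr ⟨h1, steps_subset_cons a _ h2⟩)
        · rw [hexp]
          have := ihlen
          rw [hm'] at this
          simp only [List.length_cons] at this ⊢
          omega


lemma head?_map' {α β : Type} (f : α → β) (l : List α) : (l.map f).head? = l.head?.map f := by
  cases l <;> rfl

lemma getLast?_map' {α β : Type} (f : α → β) : ∀ l : List α, (l.map f).getLast? = l.getLast?.map f := by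
  intro l
  induction l with
  | nil => rfl
  | cons a t ih =>
    cases t with
    | nil => rfl
    | cons b t' =>
      show (f a :: f b :: t'.map f).getLast? = ((a :: b :: t').getLast?).map f
      rw [List.getLast?_cons_cons, List.getLast?_cons_cons]
      exact ih

lemma option_val_eq {p : V → Prop} {o : Option {a : V // p a}} {s : V} (hp : p s)
    (h : o.map Subtype.val = some s) : o = some ⟨s, hp⟩ := by
  cases o with
  | none => simp at h
  | some u => simp at h ⊢; exact Subtype.ext h

lemma wsum_subtype {y : V} (G' : WDigraph {a : V // a ≠ y}) (W : V → V → ℝ≥0∞)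
    (hw : ∀ a b : {a : V // a ≠ y}, G'.Edge a b → G'.w a b = W a.val b.val) :
    ∀ l : List {a : V // a ≠ y}, l.Chain' G'.Edge →
      wsum G'.w l = wsum W (l.map Subtype.val) := by
  intro l
  induction l with
  | nil => intro _; rfl
  | cons a t ih =>
    cases t with
    | nil => intro _; rfl
    | cons b t' =>
      intro hch
      show G'.w a b + wsum G'.w (b :: t') = W a.val b.val + wsum W ((b :: t').map Subtype.val)
      rw [hw a b (List.isChain_cons_cons.1 hch).1, ih (List.isChain_cons_cons.1 hch).2]

lemma dir1 (G : WDigraph V) (hbi : G.Bidirected) (y x z : V) (hxz : x ≠ z)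
    (hnb : ∀ a : V, G.Edge y a ↔ (a = x ∨ a = z)) (hnadj : ¬ G.Edge x z)
    (G' : WDigraph {a : V // a ≠ y})
    (hE : ∀ a b : {a : V // a ≠ y},
      G'.Edge a b ↔ (G.Edge (a : V) (b : V) ∨
        ((a : V) = x ∧ (b : V) = z) ∨ ((a : V) = z ∧ (b : V) = x)))
    (hw1 : ∀ a b : {a : V // a ≠ y}, G.Edge (a : V) (b : V) →
      G'.w a b = G.w (a : V) (b : V))
    (hw2 : ∀ a b : {a : V // a ≠ y}, (a : V) = x → (b : V) = z →
      G'.w a b = G.w x y + G.w y z)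
    (hw3 : ∀ a b : {a : V // a ≠ y}, (a : V) = z → (b : V) = x →
      G'.w a b = G.w z y + G.w y x)
    (l : List V) (hc : G.IsCycle l) (hnd : ¬ WDigraph.Degenerate l) :
    ∃ l', G'.IsCycle l' ∧ ¬ WDigraph.Degenerate l' ∧ G'.wWalk l' = G.wWalk l := by
  obtain ⟨s, ⟨⟨hne, hch⟩, hhd, hlt⟩⟩ := hc
  have hnd1 : l.length ≠ 1 := fun h => hnd (Or.inl h)
  have H : ∀ u v : V, (u, v) ∈ steps l → (v, u) ∈ steps l → False :=
    fun u v h1 h2 => hnd (Or.inr ⟨u, v, h1, h2⟩)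
  have hlen2 : 2 ≤ l.length := by
    have := List.length_pos_iff.2 hne
    omega
  obtain ⟨r, s₀, hs₀y, hrch, hrhd, hrlt, hrsteps, hrw, hrlen⟩ :
      ∃ (r : List V) (s₀ : V), s₀ ≠ y ∧ r.Chain' G.Edge ∧ r.head? = some s₀ ∧
        r.getLast? = some s₀ ∧ (∀ p : V × V, p ∈ steps r ↔ p ∈ steps l) ∧
        wsum G.w r = wsum G.w l ∧ 2 ≤ r.length := by
    by_cases hsy : s = y
    · subst hsy
      cases l with
      | nil => exact absurd rfl hne
      | cons u t =>
        have hu : u = s := by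
          rw [List.head?_cons] at hhd
          exact Option.some_injective _ hhd
        subst hu
        cases t with
        | nil => simp at hlen2
        | cons a t' =>
          have hEya : G.Edge u a := (List.isChain_cons_cons.1 hch).1
          have hay : a ≠ u := fun h => G.irrefl u (h ▸ hEya)
          have hlast : (a :: t').getLast? = some u := by
            rw [← List.getLast?_cons_cons (a := u)]
            exact hlt
          have hgl : (a :: t').getLast (List.cons_ne_nil _ _) = u := by
            have h9 := List.getLast?_eq_getLast (l := a :: t') (List.cons_ne_nil _ _)
            rw [h9] at hlast
            exact Option.some_injective _ hlast
          have hsr : steps ((a :: t') ++ [a]) = steps (a :: t') ++ [(u, a)] := by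
            rw [steps_append_last (a :: t') (List.cons_ne_nil _ _) a, hgl]
          have hsl : steps (u :: a :: t') = (u, a) :: steps (a :: t') := steps_cons₂ ..
          refine ⟨(a :: t') ++ [a], a, hay, ?_, rfl, ?_, ?_, ?_, ?_⟩
          · apply List.isChain_append.2
            refine ⟨(List.isChain_cons_cons.1 hch).2, List.isChain_singleton a, ?_⟩
            intro p hp q hq
            rw [hlast, Option.mem_some_iff] at hp
            rw [List.head?_cons, Option.mem_some_iff] at hq
            cases hp
            cases hq
            exact hEya
          · rw [List.getLast?_append_of_ne_nil (a :: t') (by simp)]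
            rfl
          · intro p
            rw [hsr, hsl]
            simp only [List.mem_append, List.mem_cons, List.mem_singleton]
            tauto
          · rw [← wsum_eq, ← wsum_eq, hsr, hsl]
            simp only [List.map_append, List.sum_append, List.map_cons, List.sum_cons,
              List.map_nil, List.sum_nil]
            rw [add_zero]
            exact add_comm _ _
          · simp
    · exact ⟨l, s, hsy, hch, hhd, hlt, fun p => Iff.rfl, rfl, hlen2⟩
  obtain ⟨dh, dl, dch, dm, dw, ds, dlen⟩ :=
    delY_main G y x z hbi hxz hnb hnadj r.length r le_rfl hrch
      (fun u v h1 h2 => H u v ((hrsteps _).1 h1) ((hrsteps _).1 h2))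
      (fun a ha => by rw [hrhd, Option.mem_some_iff] at ha; exact ha ▸ hs₀y)
      (fun a ha => by rw [hrlt, Option.mem_some_iff] at ha; exact ha ▸ hs₀y)
  have dlen2 : 2 ≤ (delY y r).length := dlen hrlen
  set l₀ := delY y r with hl₀
  have hl₀hd : l₀.head? = some s₀ := by rw [hl₀, dh, hrhd]
  have hl₀lt : l₀.getLast? = some s₀ := by rw [hl₀, dl, hrlt]
  have hsteps₀ : ∀ p ∈ steps l₀, p ∈ steps l ∨ ((p.1, y) ∈ steps l ∧ (y, p.2) ∈ steps l) := by
    intro p hp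
    rcases ds p hp with h | ⟨h1, h2⟩
    · exact Or.inl ((hrsteps _).1 h)
    · exact Or.inr ⟨(hrsteps _).1 h1, (hrsteps _).1 h2⟩
  let l'' : List {a : V // a ≠ y} := l₀.pmap (fun a ha => ⟨a, ha⟩) dm
  have hmv : l''.map Subtype.val = l₀ := map_val_pmap l₀ dm
  have hhd'' : l''.head? = some ⟨s₀, hs₀y⟩ := by
    refine option_val_eq (p := fun a : V => a ≠ y) hs₀y ?_
    rw [← head?_map' Subtype.val l'', hmv, hl₀hd]
  have hlt'' : l''.getLast? = some ⟨s₀, hs₀y⟩ := by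
    refine option_val_eq (p := fun a : V => a ≠ y) hs₀y ?_
    rw [← getLast?_map' Subtype.val l'', hmv, hl₀lt]
  have hlen'' : l''.length = l₀.length := by
    rw [← hmv, List.length_map]
  have hstepsm : steps l₀ = (steps l'').map (Prod.map Subtype.val Subtype.val) := by
    rw [← hmv, steps_map]
  have hch'' : l''.Chain' G'.Edge := by
    have h0 : (l''.map Subtype.val).Chain' (Rel G x z) := hmv ▸ dch
    exact ((List.isChain_map Subtype.val).1 h0).imp (fun a b h => (hE a b).2 h)
  have hGW : ∀ a b : {a : V // a ≠ y}, G'.Edge a b → G'.w a b = Wt G x y z a.val b.val := by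
    intro a b hab
    rcases (hE a b).1 hab with h | ⟨h1, h2⟩ | ⟨h1, h2⟩
    · rw [hw1 a b h]
      refine (Wt_other G x y z _ _ ?_ ?_).symm
      · rintro ⟨h1, h2⟩; apply hnadj; rw [← h1, ← h2]; exact h
      · rintro ⟨h1, h2⟩; apply hnadj; apply hbi; rw [← h1, ← h2]; exact h
    · rw [hw2 a b h1 h2, h1, h2, Wt_xz]
    · rw [hw3 a b h1 h2, h1, h2, Wt_zx G x y z hxz]
  refine ⟨l'', ⟨⟨s₀, hs₀y⟩, ⟨?_, hch''⟩, hhd'', hlt''⟩, ?_, ?_⟩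
  · intro h0
    rw [h0] at hlen''
    simp at hlen''
    omega
  · rintro (h1 | ⟨u, v, h1, h2⟩)
    · rw [hlen''] at h1; omega
    · have hm1 : (u.val, v.val) ∈ steps l₀ := by
        rw [hstepsm]
        exact List.mem_map.2 ⟨(u, v), h1, rfl⟩
      have hm2 : (v.val, u.val) ∈ steps l₀ := by
        rw [hstepsm]
        exact List.mem_map.2 ⟨(v, u), h2, rfl⟩
      have key : ∀ su sv : V, (su, sv) ∈ steps l → (sv, y) ∈ steps l → (y, su) ∈ steps l → False := by
        intro su sv hA hB hC
        by_cases hsuv : su = sv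
        · exact H sv y hB (hsuv ▸ hC)
        · have hsu : su = x ∨ su = z := (hnb su).1 (mem_steps_chain' hch hC)
          have hsv : sv = x ∨ sv = z := (hnb sv).1 (hbi _ _ (mem_steps_chain' hch hB))
          have hEsusv : G.Edge su sv := mem_steps_chain' hch hA
          rcases hsu with rfl | rfl
          · rcases hsv with rfl | rfl
            · exact hsuv rfl
            · exact hnadj hEsusv
          · rcases hsv with rfl | rfl
            · exact hnadj (hbi _ _ hEsusv)
            · exact hsuv rfl
      rcases hsteps₀ _ hm1 with hA | ⟨hA1, hA2⟩ <;> rcases hsteps₀ _ hm2 with hB | ⟨hB1, hB2⟩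
      · exact H _ _ hA hB
      · exact key _ _ hA hB1 hB2
      · exact key _ _ hB hA1 hA2
      · exact H _ _ hA1 hB2
  · rw [wWalk_eq_wsum, wWalk_eq_wsum, wsum_subtype G' (Wt G x y z) hGW l'' hch'', hmv, hl₀, dw, hrw]

lemma dir2 (G : WDigraph V) (hbi : G.Bidirected) (y x z : V) (hxz : x ≠ z)
    (hnb : ∀ a : V, G.Edge y a ↔ (a = x ∨ a = z)) (hnadj : ¬ G.Edge x z)
    (G' : WDigraph {a : V // a ≠ y})
    (hE : ∀ a b : {a : V // a ≠ y},
      G'.Edge a b ↔ (G.Edge (a : V) (b : V) ∨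
        ((a : V) = x ∧ (b : V) = z) ∨ ((a : V) = z ∧ (b : V) = x)))
    (hw1 : ∀ a b : {a : V // a ≠ y}, G.Edge (a : V) (b : V) →
      G'.w a b = G.w (a : V) (b : V))
    (hw2 : ∀ a b : {a : V // a ≠ y}, (a : V) = x → (b : V) = z →
      G'.w a b = G.w x y + G.w y z)
    (hw3 : ∀ a b : {a : V // a ≠ y}, (a : V) = z → (b : V) = x →
      G'.w a b = G.w z y + G.w y x)
    (l'' : List {a : V // a ≠ y}) (hc : G'.IsCycle l'') (hnd : ¬ WDigraph.Degenerate l'') :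
    ∃ l, G.IsCycle l ∧ ¬ WDigraph.Degenerate l ∧ G.wWalk l = G'.wWalk l'' := by
  obtain ⟨s'', ⟨⟨hne, hch''⟩, hhd'', hlt''⟩⟩ := hc
  have hnd1 : l''.length ≠ 1 := fun h => hnd (Or.inl h)
  have H'' : ∀ u v, (u, v) ∈ steps l'' → (v, u) ∈ steps l'' → False :=
    fun u v h1 h2 => hnd (Or.inr ⟨u, v, h1, h2⟩)
  have hlen2 : 2 ≤ l''.length := by
    have := List.length_pos_iff.2 hne
    omega
  set m := l''.map Subtype.val with hm
  have hmem : ∀ v ∈ m, v ≠ y := by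
    intro v hv
    obtain ⟨u, _, rfl⟩ := List.mem_map.1 hv
    exact u.2
  have hchm : m.Chain' (Rel G x z) := by
    apply (List.isChain_map Subtype.val).2
    exact hch''.imp fun a b h => (hE a b).1 h
  have hhdm : m.head? = some s''.val := by rw [hm, head?_map', hhd'']; rfl
  have hltm : m.getLast? = some s''.val := by rw [hm, getLast?_map', hlt'']; rfl
  have hstepsm : steps m = (steps l'').map (Prod.map Subtype.val Subtype.val) := by
    rw [hm, steps_map]
  have hlenm : m.length = l''.length := List.length_map ..
  have hsm : ∀ p : V × V, p ∈ steps m → p.1 ≠ y ∧ p.2 ≠ y := fun p hp =>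
    ⟨hmem _ (mem_of_mem_steps hp).1, hmem _ (mem_of_mem_steps hp).2⟩
  have hrev : ∀ a b c d : V, (a, b) ∈ steps m → (c, d) ∈ steps m → a = d → b = c → False := by
    intro a b c d h1 h2 had hbc
    rw [hstepsm] at h1 h2
    obtain ⟨⟨p1, p2⟩, hp, hpe⟩ := List.mem_map.1 h1
    obtain ⟨⟨q1, q2⟩, hq, hqe⟩ := List.mem_map.1 h2
    have e1 : p1.val = a := congrArg Prod.fst hpe
    have e2 : p2.val = b := congrArg Prod.snd hpe
    have e3 : q1.val = c := congrArg Prod.fst hqe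
    have e4 : q2.val = d := congrArg Prod.snd hqe
    have hq1 : q1 = p2 := Subtype.ext (by rw [e3, ← hbc, ← e2])
    have hq2 : q2 = p1 := Subtype.ext (by rw [e4, ← had, ← e1])
    rw [hq1, hq2] at hq
    exact H'' p1 p2 hp hq
  have hxzrev : (x, z) ∈ steps m → (z, x) ∈ steps m → False :=
    fun h1 h2 => hrev x z z x h1 h2 rfl rfl
  have hEyx : G.Edge y x := (hnb x).2 (Or.inl rfl)
  have hEyz : G.Edge y z := (hnb z).2 (Or.inr rfl)
  have hxny : x ≠ y := fun h => G.irrefl y (h ▸ hEyx)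
  have hzny : z ≠ y := fun h => G.irrefl y (h ▸ hEyz)
  have hGW : ∀ a b : {a : V // a ≠ y}, G'.Edge a b → G'.w a b = Wt G x y z a.val b.val := by
    intro a b hab
    rcases (hE a b).1 hab with h | ⟨h1, h2⟩ | ⟨h1, h2⟩
    · rw [hw1 a b h]
      refine (Wt_other G x y z _ _ ?_ ?_).symm
      · rintro ⟨h1, h2⟩; apply hnadj; rw [← h1, ← h2]; exact h
      · rintro ⟨h1, h2⟩; apply hnadj; apply hbi; rw [← h1, ← h2]; exact h
    · rw [hw2 a b h1 h2, h1, h2, Wt_xz]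
    · rw [hw3 a b h1 h2, h1, h2, Wt_zx G x y z hxz]
  obtain ⟨eh, el, ech, ew, es, elen⟩ := expy_main G y x z hbi hxz hnb m hchm
  refine ⟨expy x y z m, ⟨s''.val, ⟨?_, ech⟩, by rw [eh, hhdm], by rw [el, hltm]⟩, ?_, ?_⟩
  · intro h0
    rw [h0, hhdm] at eh
    simp at eh
  · rintro (h1 | ⟨u, v, h1, h2⟩)
    · omega
    · rcases es (u, v) h1 with hA | ⟨hA1, hA2⟩ | ⟨hA1, hA2⟩ <;>
        rcases es (v, u) h2 with hB | ⟨hB1, hB2⟩ | ⟨hB1, hB2⟩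
      · exact hrev u v v u hA hB rfl rfl
      · rcases hB1 with h | h
        · injection h with e1 e2; exact (hsm _ hA).1 e2
        · injection h with e1 e2; exact (hsm _ hA).2 e1
      · rcases hB1 with h | h
        · injection h with e1 e2; exact (hsm _ hA).1 e2
        · injection h with e1 e2; exact (hsm _ hA).2 e1
      · rcases hA1 with h | h
        · injection h with e1 e2; exact (hsm _ hB).1 e2
        · injection h with e1 e2; exact (hsm _ hB).2 e1
      · rcases hA1 with h | h <;> rcases hB1 with h' | h'
        · injection h with e1 e2; injection h' with e3 e4
          exact hxny (e3.symm.trans e2)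
        · injection h with e1 e2; injection h' with e3 e4
          exact hxz (e1.symm.trans e4)
        · injection h with e1 e2; injection h' with e3 e4
          exact hxz (e3.symm.trans e2)
        · injection h with e1 e2; injection h' with e3 e4
          exact hzny (e3.symm.trans e2).symm
      · exact hxzrev hA2 hB2
      · rcases hA1 with h | h
        · injection h with e1 e2; exact (hsm _ hB).1 e2
        · injection h with e1 e2; exact (hsm _ hB).2 e1
      · exact hxzrev hB2 hA2
      · rcases hA1 with h | h <;> rcases hB1 with h' | h'
        · injection h with e1 e2; injection h' with e3 e4
          exact hzny (e3.symm.trans e2)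
        · injection h with e1 e2; injection h' with e3 e4
          exact hxz (e1.symm.trans e4).symm
        · injection h with e1 e2; injection h' with e3 e4
          exact hxz (e3.symm.trans e2).symm
        · injection h with e1 e2; injection h' with e3 e4
          exact hxny (e3.symm.trans e2).symm
  · rw [wWalk_eq_wsum, wWalk_eq_wsum, ew,
      wsum_subtype G' (Wt G x y z) hGW l'' hch'', ← hm]

end D
end Stmt7Aux

/-- Let `G` be a simple bidirected graph with nonnegative
edge weights and let `y` be a node of `G` with exactly two neighbors `x` and
`z`, where `x` and `z` are not adjacent in `G`.  Let `G'` be obtained from `G`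
by deleting `y` and its four incident edges and adding edges `xz` with weight
`w(xy) + w(yz)` and `zx` with weight `w(zy) + w(yx)`.  Then `G` has a
non-degenerate cycle iff `G'` does, and in that case the minimum weight of a
non-degenerate cycle of `G` equals the minimum weight of a non-degenerate
cycle of `G'`. -/
theorem stmt7 {V : Type} (G : WDigraph V) (hbi : G.Bidirected)
    (y x z : V) (hxz : x ≠ z)
    (hnb : ∀ a : V, G.Edge y a ↔ (a = x ∨ a = z))
    (hnadj : ¬ G.Edge x z)
    (G' : WDigraph {a : V // a ≠ y})
    (hE : ∀ a b : {a : V // a ≠ y},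
      G'.Edge a b ↔ (G.Edge (a : V) (b : V) ∨
        ((a : V) = x ∧ (b : V) = z) ∨ ((a : V) = z ∧ (b : V) = x)))
    (hw1 : ∀ a b : {a : V // a ≠ y}, G.Edge (a : V) (b : V) →
      G'.w a b = G.w (a : V) (b : V))
    (hw2 : ∀ a b : {a : V // a ≠ y}, (a : V) = x → (b : V) = z →
      G'.w a b = G.w x y + G.w y z)
    (hw3 : ∀ a b : {a : V // a ≠ y}, (a : V) = z → (b : V) = x →
      G'.w a b = G.w z y + G.w y x) :
    ((∃ l, G.IsCycle l ∧ ¬ WDigraph.Degenerate l) ↔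
      (∃ l, G'.IsCycle l ∧ ¬ WDigraph.Degenerate l)) ∧
    ((∃ l, G.IsCycle l ∧ ¬ WDigraph.Degenerate l) →
      sInf {x | ∃ l, G.IsCycle l ∧ ¬ WDigraph.Degenerate l ∧ G.wWalk l = x} =
        sInf {x | ∃ l, G'.IsCycle l ∧ ¬ WDigraph.Degenerate l ∧ G'.wWalk l = x}) := by
  
  constructor
  · constructor
    · rintro ⟨l, hc, hnd⟩
      obtain ⟨l', h1, h2, _⟩ :=
        Stmt7Aux.D.dir1 G hbi y x z hxz hnb hnadj G' hE hw1 hw2 hw3 l hc hnd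
      exact ⟨l', h1, h2⟩
    · rintro ⟨l, hc, hnd⟩
      obtain ⟨l2, h1, h2, _⟩ :=
        Stmt7Aux.D.dir2 G hbi y x z hxz hnb hnadj G' hE hw1 hw2 hw3 l hc hnd
      exact ⟨l2, h1, h2⟩
  · intro _
    congr 1
    ext w
    constructor
    · rintro ⟨l, hc, hnd, hw⟩
      obtain ⟨l', h1, h2, h3⟩ :=
        Stmt7Aux.D.dir1 G hbi y x z hxz hnb hnadj G' hE hw1 hw2 hw3 l hc hnd
      exact ⟨l', h1, h2, by rw [h3, hw]⟩
    · rintro ⟨l', hc, hnd, hw⟩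
      obtain ⟨l2, h1, h2, h3⟩ :=
        Stmt7Aux.D.dir2 G hbi y x z hxz hnb hnadj G' hE hw1 hw2 hw3 l' hc hnd
      exact ⟨l2, h1, h2, by rw [h3, hw]⟩
end
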